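/- arXiv:2205.15740 — 8 statements merged into one kernel-verified Lean document; each statement's English description precedes it below -/
import Mathlib

section
/- Let p be an odd prime and n ≥ 1. The Reidemeister spectrum of Z/p^nZ equals {p^i : 0 ≤ i ≤ n}. -/
/-- The Reidemeister number of an (additive) endomorphism `φ`: the number of
`φ`-twisted conjugacy classes, where `x` and `y` are `φ`-conjugate iff
`x = z + y - φ z` for some `z`. -/
noncomputable def twistedClasses {A : Type*} [AddCommGroup A] (φ : A →+ A) : ℕ :=
  Nat.card (Quot (fun x y : A => ∃ z : A, x = z + y - φ z))

/-- The Reidemeister spectrum: the set of Reidemeister numbers of automorphisms. -/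
noncomputable def reidSpec (A : Type*) [AddCommGroup A] : Set ℕ :=
  {r | ∃ φ : A ≃+ A, twistedClasses φ.toAddMonoidHom = r}

lemma tc_eq_index {A : Type*} [AddCommGroup A] (φ : A →+ A) :
    twistedClasses φ = (AddMonoidHom.range (AddMonoidHom.id A - φ)).index := by
  unfold twistedClasses AddSubgroup.index
  refine Nat.card_congr (Quot.congrRight fun x y => ?_)
  rw [QuotientAddGroup.leftRel_apply]
  constructor
  · rintro ⟨z, rfl⟩
    exact ⟨-z, by simp [AddMonoidHom.sub_apply, map_neg]; abel⟩
  · rintro ⟨w, hw⟩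
    refine ⟨-w, ?_⟩
    simp [AddMonoidHom.sub_apply] at hw
    rw [map_neg]
    have : x = y - (w - φ w) := by rw [hw]; abel
    rw [this]; abel

lemma tc_zmod {N : ℕ} [NeZero N] (ψ : ZMod N →+ ZMod N) :
    twistedClasses ψ = Nat.gcd N ((1 - ψ 1).val) := by
  have hN : N ≠ 0 := NeZero.ne N
  set c : ZMod N := 1 - ψ 1 with hc
  have hψ : ∀ x : ZMod N, ψ x = x * ψ 1 := by
    intro x
    have h1 : x = x.val • (1 : ZMod N) := by
      rw [nsmul_eq_mul, mul_one, ZMod.natCast_val, ZMod.cast_id]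
    rw [h1, map_nsmul, nsmul_eq_mul, nsmul_eq_mul, mul_one]
  have hrange : AddMonoidHom.range (AddMonoidHom.id (ZMod N) - ψ)
      = AddSubgroup.zmultiples c := by
    ext y
    simp only [AddMonoidHom.mem_range, AddMonoidHom.sub_apply, AddMonoidHom.id_apply,
      AddSubgroup.mem_zmultiples_iff]
    constructor
    · rintro ⟨x, rfl⟩
      refine ⟨(x.val : ℤ), ?_⟩
      rw [hψ x, zsmul_eq_mul, hc]
      push_cast
      rw [ZMod.natCast_val, ZMod.cast_id]
      ring
    · rintro ⟨k, rfl⟩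
      refine ⟨(k : ZMod N), ?_⟩
      rw [hψ, zsmul_eq_mul, hc]
      ring
  rw [tc_eq_index, hrange]
  have hcard : (AddSubgroup.zmultiples c).index * Nat.card (AddSubgroup.zmultiples c)
      = Nat.card (ZMod N) := AddSubgroup.index_mul_card _
  rw [Nat.card_zmultiples, Nat.card_zmod] at hcard
  have horder : addOrderOf c = N / N.gcd c.val := by
    conv_lhs => rw [show c = ((c.val : ℕ) : ZMod N) by rw [ZMod.natCast_val, ZMod.cast_id]]
    exact ZMod.addOrderOf_coe c.val hN
  rw [horder] at hcard
  have hg : N.gcd c.val ∣ N := Nat.gcd_dvd_left _ _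
  have hgpos : 0 < N.gcd c.val := Nat.gcd_pos_of_pos_left _ (Nat.pos_of_ne_zero hN)
  have hq : N / N.gcd c.val ≠ 0 := by
    have := Nat.div_pos (Nat.le_of_dvd (Nat.pos_of_ne_zero hN) hg) hgpos
    omega
  have : N.gcd c.val * (N / N.gcd c.val) = N := Nat.mul_div_cancel' hg
  exact Nat.eq_of_mul_eq_mul_right (Nat.pos_of_ne_zero hq) (by omega)


theorem stmt_5 (p n : ℕ) (hp : p.Prime) (hodd : Odd p) (hn : 1 ≤ n) :
    reidSpec (ZMod (p ^ n)) = {r | ∃ i, i ≤ n ∧ r = p ^ i} := by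
  haveI : NeZero (p ^ n) := ⟨pow_ne_zero n hp.pos.ne'⟩
  ext r
  simp only [reidSpec, Set.mem_setOf_eq]
  constructor
  · rintro ⟨φ, rfl⟩
    rw [tc_zmod]
    obtain ⟨i, hi, hg⟩ := (Nat.dvd_prime_pow hp).mp
      (Nat.gcd_dvd_left (p ^ n) ((1 - φ.toAddMonoidHom 1).val))
    exact ⟨i, hi, hg⟩
  · rintro ⟨i, hi, rfl⟩
    rcases Nat.eq_zero_or_pos i with rfl | hipos
    · -- use the unit 2
      have hp2 : p ≠ 2 := by rintro rfl; simp [Nat.odd_iff] at hodd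
      have hcop : Nat.Coprime 2 (p ^ n) :=
        Nat.Coprime.pow_right n ((Nat.coprime_primes Nat.prime_two hp).mpr (Ne.symm hp2))
      set u := ZMod.unitOfCoprime 2 hcop
      refine ⟨DistribMulAction.toAddEquiv (ZMod (p ^ n)) u, ?_⟩
      rw [tc_zmod]
      have h1 : (1 : ZMod (p ^ n)) - (DistribMulAction.toAddEquiv (ZMod (p ^ n)) u).toAddMonoidHom 1
          = ((-1 : (ZMod (p ^ n))ˣ) : ZMod (p ^ n)) := by
        simp [DistribMulAction.toAddEquiv, Units.smul_def, u, ZMod.coe_unitOfCoprime]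
        ring
      rw [h1]
      have := ZMod.val_coe_unit_coprime (-1 : (ZMod (p ^ n))ˣ)
      simpa [Nat.Coprime, Nat.gcd_comm] using this.symm
    · -- use the unit 1 - p^i
      have hle : p ^ i ≤ p ^ n := Nat.pow_le_pow_right hp.pos hi
      set a := p ^ n + 1 - p ^ i with ha
      have hsub : p ∣ p ^ n - p ^ i :=
        Nat.dvd_sub (dvd_pow_self p (by omega)) (dvd_pow_self p hipos.ne')
      have hnd : ¬ p ∣ a := by
        intro hdvd
        rw [show a = (p ^ n - p ^ i) + 1 by omega] at hdvd
        have : p ∣ 1 := (Nat.dvd_add_right hsub).mp hdvd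
        have h2 := hp.one_lt
        have := Nat.le_of_dvd one_pos this
        omega
      have hcop : Nat.Coprime a (p ^ n) :=
        Nat.Coprime.pow_right n ((hp.coprime_iff_not_dvd.mpr hnd).symm)
      set u := ZMod.unitOfCoprime a hcop
      refine ⟨DistribMulAction.toAddEquiv (ZMod (p ^ n)) u, ?_⟩
      rw [tc_zmod]
      have h1 : (1 : ZMod (p ^ n)) - (DistribMulAction.toAddEquiv (ZMod (p ^ n)) u).toAddMonoidHom 1
          = ((p ^ i : ℕ) : ZMod (p ^ n)) := by
        have hcast : ((a : ℕ) : ZMod (p ^ n)) = 1 - ((p ^ i : ℕ) : ZMod (p ^ n)) := by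
          rw [ha, Nat.cast_sub (by omega), Nat.cast_add, Nat.cast_one, ZMod.natCast_self]
          ring
        simp [DistribMulAction.toAddEquiv, Units.smul_def, u, ZMod.coe_unitOfCoprime, hcast]
      rw [h1, ZMod.val_natCast]
      rw [Nat.gcd_comm, ← Nat.gcd_rec, Nat.gcd_comm]
      exact Nat.gcd_eq_left (pow_dvd_pow p hi)
end

section
/- Let p be an odd prime, n ≥ 1, and e_1 ≤ ... ≤ e_n positive integers. Let P = ⊕_{i=1}^n Z/p^{e_i}Z. Then the Reidemeister spectrum of P equals {p^m : 0 ≤ m ≤ e_1 + ... + e_n}. -/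
lemma twistedClasses_eq_card_ker {A : Type*} [AddCommGroup A] [Finite A] (φ : A →+ A) :
    twistedClasses φ = Nat.card (AddMonoidHom.ker (AddMonoidHom.id A - φ)) := by
  set ψ : A →+ A := AddMonoidHom.id A - φ with hψ
  have hrel : ∀ x y : A, (∃ z : A, x = z + y - φ z) ↔
      Setoid.r (self := QuotientAddGroup.leftRel ψ.range) x y := by
    intro x y
    rw [show (Setoid.r (self := QuotientAddGroup.leftRel ψ.range) x y) ↔ -x + y ∈ ψ.range from
      QuotientAddGroup.leftRel_apply]
    constructor
    · rintro ⟨z, rfl⟩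
      exact ⟨-z, by simp [hψ]; abel⟩
    · rintro ⟨z, hz⟩
      refine ⟨-z, ?_⟩
      simp [hψ] at hz ⊢
      linear_combination (norm := abel) hz
  have e1 : twistedClasses φ = Nat.card (A ⧸ ψ.range) :=
    Nat.card_congr (Quot.congrRight hrel)
  have h1 : Nat.card A = Nat.card (A ⧸ ψ.range) * Nat.card ψ.range :=
    AddSubgroup.card_eq_card_quotient_mul_card_addSubgroup _
  have h2 : Nat.card (A ⧸ ψ.ker) = Nat.card ψ.range :=
    Nat.card_congr (QuotientAddGroup.quotientKerEquivRange ψ).toEquiv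
  have h3 : Nat.card A = Nat.card (A ⧸ ψ.ker) * Nat.card ψ.ker :=
    AddSubgroup.card_eq_card_quotient_mul_card_addSubgroup _
  have hpos : 0 < Nat.card ψ.range := Nat.card_pos
  rw [e1]
  have := h1.symm.trans h3
  rw [h2] at this
  exact Nat.eq_of_mul_eq_mul_left hpos (by linarith [this])
section aux

lemma card_ker_mulLeft {N : ℕ} [NeZero N] (c : ℕ) (hc : c ∣ N) :
    Nat.card (AddMonoidHom.ker (AddMonoidHom.mulLeft (c : ZMod N))) = c := by
  have hN : N ≠ 0 := NeZero.ne N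
  have hrange : (AddMonoidHom.mulLeft (c : ZMod N)).range =
      AddSubgroup.zmultiples (c : ZMod N) := by
    ext x
    simp only [AddMonoidHom.mem_range, AddSubgroup.mem_zmultiples_iff,
      AddMonoidHom.coe_mulLeft]
    constructor
    · rintro ⟨y, rfl⟩
      show ∃ k : ℤ, k • ((c:ZMod N)) = (c:ZMod N) * y
      refine ⟨(y.val : ℤ), ?_⟩
      rw [zsmul_eq_mul]
      push_cast
      rw [ZMod.natCast_val, ZMod.cast_id, mul_comm]
    · rintro ⟨k, rfl⟩
      exact ⟨(k : ZMod N), by show (c:ZMod N) * _ = _; rw [zsmul_eq_mul, mul_comm]⟩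
  have hord : Nat.card (AddSubgroup.zmultiples ((c : ℕ) : ZMod N)) = N / c := by
    rw [Nat.card_zmultiples, ZMod.addOrderOf_coe c hN, Nat.gcd_eq_right hc]
  set ψ := AddMonoidHom.mulLeft (c : ZMod N)
  have h1 : Nat.card (ZMod N) = Nat.card (ZMod N ⧸ ψ.ker) * Nat.card ψ.ker :=
    AddSubgroup.card_eq_card_quotient_mul_card_addSubgroup _
  have h2 : Nat.card (ZMod N ⧸ ψ.ker) = Nat.card ψ.range :=
    Nat.card_congr (QuotientAddGroup.quotientKerEquivRange ψ).toEquiv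
  rw [h2, Nat.card_zmod, hrange, hord] at h1
  have hcpos : 0 < c := Nat.pos_of_ne_zero (by rintro rfl; simp [Nat.eq_zero_of_zero_dvd hc] at hN)
  have hdivpos : 0 < N / c := Nat.div_pos (Nat.le_of_dvd (Nat.pos_of_ne_zero hN) hc) hcpos
  have : N / c * Nat.card ψ.ker = N / c * c := by
    rw [Nat.div_mul_cancel hc]; omega
  exact Nat.eq_of_mul_eq_mul_left hdivpos this


lemma card_ker_pi {ι : Type*} [Fintype ι] {A : ι → Type*} [∀ i, AddCommGroup (A i)]
    (f : ∀ i, A i ≃+ A i) :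
    Nat.card (AddMonoidHom.ker (AddMonoidHom.id (∀ i, A i) -
        (AddEquiv.piCongrRight f).toAddMonoidHom)) =
      ∏ i, Nat.card (AddMonoidHom.ker (AddMonoidHom.id (A i) - (f i).toAddMonoidHom)) := by
  rw [← Nat.card_pi]
  refine Nat.card_congr ⟨fun x i => ⟨x.1 i, ?_⟩, fun g => ⟨fun i => (g i).1, ?_⟩,
    fun x => rfl, fun g => rfl⟩
  · have hx := x.2
    simp only [AddMonoidHom.mem_ker, AddMonoidHom.sub_apply, AddMonoidHom.id_apply,
      AddEquiv.toAddMonoidHom_eq_coe, AddMonoidHom.coe_coe, funext_iff] at hx ⊢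
    simpa [AddEquiv.piCongrRight_apply] using hx i
  · simp only [AddMonoidHom.mem_ker, AddMonoidHom.sub_apply, AddMonoidHom.id_apply,
      AddEquiv.toAddMonoidHom_eq_coe, AddMonoidHom.coe_coe, funext_iff]
    intro i
    have := (g i).2
    simp only [AddMonoidHom.mem_ker, AddMonoidHom.sub_apply, AddMonoidHom.id_apply,
      AddEquiv.toAddMonoidHom_eq_coe, AddMonoidHom.coe_coe] at this
    simpa [AddEquiv.piCongrRight_apply] using this

lemma exists_pointwise_le_sum {ι : Type*} [DecidableEq ι] (s : Finset ι) (f : ι → ℕ) (m : ℕ)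
    (hm : m ≤ ∑ i ∈ s, f i) : ∃ k : ι → ℕ, (∀ i ∈ s, k i ≤ f i) ∧ ∑ i ∈ s, k i = m := by
  induction s using Finset.induction_on generalizing m with
  | empty => refine ⟨0, by simp, ?_⟩; simp at hm ⊢; omega
  | @insert a s ha ih =>
    rw [Finset.sum_insert ha] at hm
    rcases le_or_gt (f a) m with h | h
    · obtain ⟨k, hk1, hk2⟩ := ih (m - f a) (by omega)
      refine ⟨fun i => if i = a then f a else k i, ?_, ?_⟩
      · intro i hi
        by_cases hia : i = a
        · simp [hia]
        · simp only [if_neg hia]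
          exact hk1 i (by simp [Finset.mem_insert] at hi; tauto)
      · rw [Finset.sum_insert ha, if_pos rfl,
          Finset.sum_congr rfl fun i hi => if_neg (by rintro rfl; exact ha hi),
          show s.sum k = ∑ i ∈ s, k i from rfl, hk2]
        omega
    · refine ⟨fun i => if i = a then m else 0, ?_, ?_⟩
      · intro i hi
        by_cases hia : i = a
        · simp [hia]; omega
        · simp [hia]
      · rw [Finset.sum_insert ha, if_pos rfl,
          Finset.sum_congr rfl fun i hi => if_neg (by rintro rfl; exact ha hi)]
        simp

end aux

theorem stmt_6 (p n : ℕ) (hp : p.Prime) (hodd : Odd p) (hn : 1 ≤ n)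
    (e : Fin n → ℕ) (he : Monotone e) (he1 : ∀ i, 1 ≤ e i) :
    reidSpec (∀ i : Fin n, ZMod (p ^ e i)) =
      {r | ∃ m, m ≤ ∑ i, e i ∧ r = p ^ m} := by
  haveI : ∀ i : Fin n, NeZero (p ^ e i) := fun i => ⟨pow_ne_zero _ hp.ne_zero⟩
  have hcardA : Nat.card (∀ i : Fin n, ZMod (p ^ e i)) = p ^ ∑ i, e i := by
    rw [Nat.card_pi]
    simp only [Nat.card_zmod]
    exact Finset.prod_pow_eq_pow_sum _ _ _
  ext r
  simp only [reidSpec, Set.mem_setOf_eq]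
  constructor
  · rintro ⟨φ, rfl⟩
    rw [twistedClasses_eq_card_ker]
    have hdvd := AddSubgroup.card_addSubgroup_dvd_card
      (AddMonoidHom.ker (AddMonoidHom.id _ - φ.toAddMonoidHom))
    rw [hcardA] at hdvd
    obtain ⟨m, hm, hmeq⟩ := (Nat.dvd_prime_pow hp).mp hdvd
    exact ⟨m, hm, hmeq⟩
  · rintro ⟨m, hm, rfl⟩
    obtain ⟨k, hk1, hk2⟩ := exists_pointwise_le_sum Finset.univ e m (by simpa using hm)
    have hunit : ∀ i : Fin n, IsUnit (((1 + p ^ k i : ℕ)) : ZMod (p ^ e i)) := by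
      intro i
      rw [ZMod.isUnit_iff_coprime]
      apply Nat.Coprime.pow_right
      rw [Nat.coprime_comm, hp.coprime_iff_not_dvd]
      intro hdvd
      rcases Nat.eq_zero_or_pos (k i) with hk0 | hk0
      · rw [hk0, pow_zero] at hdvd
        have h2 : p ∣ 2 := hdvd
        have := (Nat.prime_dvd_prime_iff_eq hp Nat.prime_two).mp h2
        rw [this] at hodd
        exact (Nat.not_odd_iff_even.mpr even_two) hodd
      · have h1 : p ∣ p ^ k i := dvd_pow_self p hk0.ne'
        have hone : p ∣ 1 := (Nat.dvd_add_right h1).mp (by rwa [Nat.add_comm] at hdvd)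
        have h1le := Nat.le_of_dvd one_pos hone
        have h2le := hp.two_le
        omega
    refine ⟨AddEquiv.piCongrRight (fun i => (Multiplicative.toAdd (AddAut.mulLeft ((hunit i).unit)) : ZMod (p ^ e i) ≃+ ZMod (p ^ e i))), ?_⟩
    rw [twistedClasses_eq_card_ker, card_ker_pi]
    have hcomp : ∀ i : Fin n, Nat.card (AddMonoidHom.ker (AddMonoidHom.id (ZMod (p ^ e i)) -
        (Multiplicative.toAdd (AddAut.mulLeft ((hunit i).unit)) : ZMod (p ^ e i) ≃+ ZMod (p ^ e i)).toAddMonoidHom)) =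
        p ^ k i := by
      intro i
      have hker : AddMonoidHom.ker (AddMonoidHom.id (ZMod (p ^ e i)) -
          (Multiplicative.toAdd (AddAut.mulLeft ((hunit i).unit)) : ZMod (p ^ e i) ≃+ ZMod (p ^ e i)).toAddMonoidHom) =
          AddMonoidHom.ker (AddMonoidHom.mulLeft ((p ^ k i : ℕ) : ZMod (p ^ e i))) := by
        ext x
        simp only [AddMonoidHom.mem_ker, AddMonoidHom.sub_apply, AddMonoidHom.id_apply,
          AddMonoidHom.coe_mulLeft, AddEquiv.toAddMonoidHom_eq_coe, AddMonoidHom.coe_coe]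
        have hux : (Multiplicative.toAdd (AddAut.mulLeft ((hunit i).unit)) : ZMod (p ^ e i) ≃+ ZMod (p ^ e i)) x =
            ((1 + p ^ k i : ℕ) : ZMod (p ^ e i)) * x := by
          show ((hunit i).unit : ZMod (p ^ e i)) * x = _
          rw [IsUnit.unit_spec]
        rw [hux]
        push_cast
        constructor
        · intro h; linear_combination -h
        · intro h; linear_combination -h
      rw [hker, card_ker_mulLeft _ (pow_dvd_pow p (hk1 i (Finset.mem_univ i)))]
    rw [Finset.prod_congr rfl (fun i _ => hcomp i), Finset.prod_pow_eq_pow_sum, hk2]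
end

section
/- Let G_1, ..., G_n be finite groups of pairwise coprime orders and G their direct product. Then Aut(G) is isomorphic to the direct product of the Aut(G_i), via the map sending a tuple of automorphisms to the componentwise automorphism. -/
theorem stmt_7 {n : ℕ} (G : Fin n → Type*) [∀ i, Group (G i)] [∀ i, Finite (G i)]
    (hcop : ∀ i j, i ≠ j → Nat.Coprime (Nat.card (G i)) (Nat.card (G j))) :
    ∃ E : (∀ i, MulAut (G i)) ≃* MulAut (∀ i, G i),
      ∀ f : ∀ i, MulAut (G i), E f = MulEquiv.piCongrRight f := by
  classical
  -- key: any automorphism sends mulSingle i x to something supported at i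
  have key : ∀ (φ : MulAut (∀ i, G i)) (i j : Fin n) (x : G i), i ≠ j →
      φ (Pi.mulSingle i x) j = 1 := by
    intro φ i j x hij
    have h1 : orderOf (φ (Pi.mulSingle i x) j) ∣ Nat.card (G i) := by
      have h0 := orderOf_map_dvd (Pi.evalMonoidHom G j) (φ (Pi.mulSingle i x))
      refine h0.trans ?_
      have e1 : orderOf (φ (Pi.mulSingle i x)) = orderOf (Pi.mulSingle i x) :=
        orderOf_injective φ.toMonoidHom φ.injective _
      have e2 : orderOf (Pi.mulSingle i x) = orderOf x :=
        orderOf_injective (MonoidHom.mulSingle G i) (Pi.mulSingle_injective (M := G) i) x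
      rw [e1, e2]
      exact orderOf_dvd_natCard x
    have h2 : orderOf (φ (Pi.mulSingle i x) j) ∣ Nat.card (G j) :=
      orderOf_dvd_natCard _
    have := Nat.eq_one_of_dvd_coprimes (hcop i j hij) h1 h2
    exact orderOf_eq_one_iff.mp this
  have single : ∀ (φ : MulAut (∀ i, G i)) (i : Fin n) (x : G i),
      φ (Pi.mulSingle i x) = Pi.mulSingle i (φ (Pi.mulSingle i x) i) := by
    intro φ i x
    funext j
    by_cases h : i = j
    · subst h; simp
    · rw [key φ i j x h, Pi.mulSingle_eq_of_ne (Ne.symm h)]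
  -- componentwise automorphism extracted from φ
  have surj : ∀ φ : MulAut (∀ i, G i), ∃ f : ∀ i, MulAut (G i),
      MulEquiv.piCongrRight f = φ := by
    intro φ
    refine ⟨fun i => {
      toFun := fun x => φ (Pi.mulSingle i x) i
      invFun := fun x => φ.symm (Pi.mulSingle i x) i
      left_inv := ?_
      right_inv := ?_
      map_mul' := ?_ }, ?_⟩
    · intro x
      show φ.symm (Pi.mulSingle i (φ (Pi.mulSingle i x) i)) i = x
      rw [← single φ i x]
      simp
    · intro x
      show φ (Pi.mulSingle i (φ.symm (Pi.mulSingle i x) i)) i = x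
      rw [← single φ.symm i x]
      simp
    · intro x y
      show φ (Pi.mulSingle i (x * y)) i = _
      rw [Pi.mulSingle_mul, map_mul]
      rfl
    · refine MulEquiv.ext fun g => funext fun i => ?_
      show φ (Pi.mulSingle i (g i)) i = φ g i
      have hg := Finset.noncommProd_mulSingle g
      have comm0 : ∀ j ∈ Finset.univ, ∀ k ∈ Finset.univ, j ≠ k →
          Commute (Pi.mulSingle j (g j)) (Pi.mulSingle k (g k)) :=
        fun j _ k _ _ => Pi.mulSingle_apply_commute g j k
      have e1 : φ g = Finset.univ.noncommProd
          (fun j => φ (Pi.mulSingle j (g j)))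
          (fun j hj k hk hjk => (comm0 j hj k hk hjk).map φ.toMonoidHom) := by
        conv_lhs => rw [← hg]
        exact Finset.map_noncommProd _ _ _ φ.toMonoidHom
      have e2 : φ g i = Finset.univ.noncommProd
          (fun j => φ (Pi.mulSingle j (g j)) i)
          (fun j hj k hk hjk =>
            ((comm0 j hj k hk hjk).map φ.toMonoidHom).map (Pi.evalMonoidHom G i)) := by
        have := Finset.map_noncommProd Finset.univ
          (fun j => φ (Pi.mulSingle j (g j)))
          (fun j hj k hk hjk => (comm0 j hj k hk hjk).map φ.toMonoidHom)
          (Pi.evalMonoidHom G i)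
        rw [e1]
        exact this
      rw [e2]
      refine ((Finset.noncommProd_congr
        (Finset.insert_erase (Finset.mem_univ i)).symm (fun _ _ => rfl) _).trans ?_).symm
      refine (Finset.noncommProd_insert_of_notMem _ _ _ _ (Finset.notMem_erase _ _)).trans ?_
      rw [Finset.noncommProd_eq_pow_card _ _ _ 1
          (fun j hj => key φ j i (g j) (Finset.ne_of_mem_erase hj)),
        one_pow, mul_one]
  -- injectivity
  have inj : Function.Injective
      (fun f : ∀ i, MulAut (G i) => MulEquiv.piCongrRight f) := by
    intro f g h
    funext i
    ext x
    have := congrFun (congrArg (fun e : MulEquiv _ _ => e.toFun) h) (Pi.mulSingle i x)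
    have := congrFun this i
    simpa using this
  let F : (∀ i, MulAut (G i)) →* MulAut (∀ i, G i) :=
    { toFun := fun f => MulEquiv.piCongrRight f
      map_one' := by ext g; simp
      map_mul' := by intro f g; ext x; simp [MulAut.mul_def] }
  exact ⟨MulEquiv.ofBijective F ⟨inj, fun φ => (surj φ).imp fun f hf => hf⟩,
    fun f => rfl⟩
end

section
/- Let P = ⊕_{i=1}^n Z/p^{e_i}Z with e_1 ≤ ... ≤ e_n, and let d_1, ..., d_n be non-negative integers with d_i ≤ e_i. The subgroup Q = ⊕_{i=1}^n p^{d_i}Z/p^{e_i}Z is characteristic in P if and only if d_i ≤ d_{i+1} and e_i − d_i ≤ e_{i+1} − d_{i+1} for all i ∈ {1,...,n−1}. -/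
lemma mem_zmul_iff {N k : ℕ} [NeZero N] (hk : k ∣ N) (a : ZMod N) :
    a ∈ AddSubgroup.zmultiples ((k : ℕ) : ZMod N) ↔ k ∣ a.val := by
  constructor
  · rintro ⟨t, ht⟩
    have h1 : a = (((t * k : ℤ)) : ZMod N) := by
      rw [← ht]; push_cast [zsmul_eq_mul]; ring
    have h2 : ((a.val : ℤ) : ZMod N) = a := by
      push_cast
      exact ZMod.natCast_zmod_val a
    have h3 : (((a.val : ℤ) - t * k : ℤ) : ZMod N) = 0 := by
      rw [Int.cast_sub, h2, h1]; push_cast; ring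
    have h4 : (N : ℤ) ∣ ((a.val : ℤ) - t * k) :=
      (ZMod.intCast_zmod_eq_zero_iff_dvd _ _).mp h3
    have h5 : (k : ℤ) ∣ (a.val : ℤ) := by
      have : (k : ℤ) ∣ ((a.val : ℤ) - t * k) := dvd_trans (Int.natCast_dvd_natCast.mpr hk) h4
      have h6 : (a.val : ℤ) = ((a.val : ℤ) - t * k) + t * k := by ring
      rw [h6]; exact dvd_add this ⟨t, by ring⟩
    exact_mod_cast h5
  · rintro ⟨m, hm⟩
    refine ⟨(m : ℤ), ?_⟩
    have : a = ((a.val : ℕ) : ZMod N) := (ZMod.natCast_zmod_val a).symm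
    rw [this, hm]
    push_cast [zsmul_eq_mul]
    ring

lemma core {p : ℕ} (hp : p.Prime) {ei ej di dj : ℕ} (hdi : di ≤ ei) (hdj : dj ≤ ej)
    (h : dj ≤ di ∨ (ei ≤ ej ∧ ei - di ≤ ej - dj))
    (ψ : ZMod (p ^ ei) →+ ZMod (p ^ ej)) (c : ZMod (p ^ ei)) (hc : p ^ di ∣ c.val) :
    p ^ dj ∣ (ψ c).val := by
  haveI : NeZero (p ^ ei) := ⟨(pow_pos hp.pos ei).ne'⟩
  haveI : NeZero (p ^ ej) := ⟨(pow_pos hp.pos ej).ne'⟩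
  obtain ⟨m, hm⟩ := hc
  have hc2 : c = (p ^ di : ℕ) • ((m : ℕ) : ZMod (p ^ ei)) := by
    rw [← ZMod.natCast_zmod_val c, hm]; push_cast [nsmul_eq_mul]; ring
  set u := ψ ((m : ℕ) : ZMod (p ^ ei)) with hu_def
  have hψ : ψ c = (p ^ ei : ℕ) • u ∨ True := Or.inr trivial
  have hψc : ψ c = (p ^ di : ℕ) • u := by rw [hc2, map_nsmul]
  have hu : (p ^ ei : ℕ) • u = 0 := by
    rw [hu_def, ← map_nsmul]
    have h0 : (p ^ ei : ℕ) • ((m : ℕ) : ZMod (p ^ ei)) = 0 := by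
      simp [nsmul_eq_mul, ZMod.natCast_self]
    rw [h0, map_zero]
  have hval : (ψ c).val = (p ^ di * u.val) % p ^ ej := by
    rw [hψc]
    have h1 : (p ^ di : ℕ) • u = ((p ^ di * u.val : ℕ) : ZMod (p ^ ej)) := by
      push_cast [nsmul_eq_mul]; rw [ZMod.natCast_zmod_val]
    rw [h1, ZMod.val_natCast]
  rw [hval, Nat.dvd_mod_iff (pow_dvd_pow p hdj)]
  rcases h with h | ⟨hee, hcod⟩
  · exact Dvd.dvd.mul_right (pow_dvd_pow p h) _
  · have h1 : (p ^ ei : ℕ) • u = ((p ^ ei * u.val : ℕ) : ZMod (p ^ ej)) := by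
      push_cast [nsmul_eq_mul]; rw [ZMod.natCast_zmod_val]
    have h0 : ((p ^ ei * u.val : ℕ) : ZMod (p ^ ej)) = 0 := by rw [← h1]; exact hu
    have hdvd : p ^ ej ∣ p ^ ei * u.val := (ZMod.natCast_eq_zero_iff _ _).mp h0
    obtain ⟨s, hs⟩ := hdvd
    have hval2 : u.val = p ^ (ej - ei) * s := by
      have hppos : 0 < p ^ ei := pow_pos hp.pos ei
      have h2 : p ^ ei * u.val = p ^ ei * (p ^ (ej - ei) * s) := by
        rw [hs, ← mul_assoc, ← pow_add]
        congr 2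
        omega
      exact Nat.eq_of_mul_eq_mul_left hppos h2
    rw [hval2, show p ^ di * (p ^ (ej - ei) * s) = p ^ (di + (ej - ei)) * s by
      rw [pow_add]; ring]
    exact Dvd.dvd.mul_right (pow_dvd_pow p (by omega)) _

/-- A "shear" automorphism of a product of additive groups. -/
def shear {n : ℕ} {A : Fin n → Type*} [∀ k, AddCommGroup (A k)] (i j : Fin n) (hij : i ≠ j)
    (f : A i →+ A j) : (∀ k, A k) ≃+ (∀ k, A k) where
  toFun x := x + Pi.single j (f (x i))
  invFun x := x - Pi.single j (f (x i))
  left_inv x := by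
    have h : (x + Pi.single j (f (x i))) i = x i := by
      simp [Pi.single_eq_of_ne hij]
    simp only [h]
    abel
  right_inv x := by
    have h : (x - Pi.single j (f (x i))) i = x i := by
      simp [Pi.single_eq_of_ne hij]
    simp only [h]
    abel
  map_add' x y := by
    simp only [Pi.add_apply, map_add, Pi.single_add]
    abel

lemma shear_apply {n : ℕ} {A : Fin n → Type*} [∀ k, AddCommGroup (A k)] (i j : Fin n)
    (hij : i ≠ j) (f : A i →+ A j) (x : ∀ k, A k) :
    shear i j hij f x = x + Pi.single j (f (x i)) := rfl
theorem stmt_10 {p n : ℕ} (hp : p.Prime) (e d : Fin n → ℕ)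
    (hmono : Monotone e) (he1 : ∀ i, 1 ≤ e i) (hde : ∀ i, d i ≤ e i) :
    (AddSubgroup.pi Set.univ
        (fun i : Fin n => AddSubgroup.zmultiples ((p ^ d i : ℕ) : ZMod (p ^ e i)))
        : AddSubgroup (∀ i : Fin n, ZMod (p ^ e i))).Characteristic ↔
      (∀ (i : ℕ) (hi : i + 1 < n),
        d ⟨i, Nat.lt_of_succ_lt hi⟩ ≤ d ⟨i + 1, hi⟩ ∧
        e ⟨i, Nat.lt_of_succ_lt hi⟩ - d ⟨i, Nat.lt_of_succ_lt hi⟩ ≤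
          e ⟨i + 1, hi⟩ - d ⟨i + 1, hi⟩) := by
  haveI hNZ : ∀ k : Fin n, NeZero (p ^ e k) := fun k => ⟨(pow_pos hp.pos (e k)).ne'⟩
  set Q : AddSubgroup (∀ i : Fin n, ZMod (p ^ e i)) :=
    AddSubgroup.pi Set.univ
      (fun i : Fin n => AddSubgroup.zmultiples ((p ^ d i : ℕ) : ZMod (p ^ e i))) with hQ
  have hmemQ : ∀ x, x ∈ Q ↔ ∀ k : Fin n, p ^ d k ∣ (x k).val := by
    intro x
    rw [hQ, AddSubgroup.mem_pi]
    constructor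
    · intro h k
      exact (mem_zmul_iff (pow_dvd_pow p (hde k)) (x k)).mp (h k (Set.mem_univ k))
    · intro h k _
      exact (mem_zmul_iff (pow_dvd_pow p (hde k)) (x k)).mpr (h k)
  constructor
  · -- forward direction
    intro hchar i hi
    set i0 : Fin n := ⟨i, Nat.lt_of_succ_lt hi⟩ with hi0
    set i1 : Fin n := ⟨i + 1, hi⟩ with hi1
    have hne : i0 ≠ i1 := by simp [hi0, hi1, Fin.ext_iff]
    have hee : e i0 ≤ e i1 := hmono (by simp [hi0, hi1, Fin.mk_le_mk])
    constructor
    · -- d i0 ≤ d i1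
      by_contra hcon
      push_neg at hcon
      set f : ZMod (p ^ e i1) →+ ZMod (p ^ e i0) :=
        (ZMod.castHom (pow_dvd_pow p hee) (ZMod (p ^ e i0))).toAddMonoidHom with hf
      set φ := shear (A := fun k : Fin n => ZMod (p ^ e k)) i1 i0 hne.symm f with hφ
      set q : ∀ k : Fin n, ZMod (p ^ e k) :=
        Pi.single i1 ((p ^ d i1 : ℕ) : ZMod (p ^ e i1)) with hq
      have hqQ : q ∈ Q := by
        rw [hmemQ]
        intro k
        by_cases hk : k = i1
        · subst hk
          rw [hq, Pi.single_eq_same, ZMod.val_natCast]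
          exact Nat.dvd_mod_iff (pow_dvd_pow p (hde _)) |>.mpr dvd_rfl
        · rw [hq, Pi.single_eq_of_ne hk]
          simp
      have hφqQ : φ q ∈ Q := by
        have := hchar.fixed φ
        rw [← this] at hqQ
        exact hqQ
      have hfval : f ((p ^ d i1 : ℕ) : ZMod (p ^ e i1)) = ((p ^ d i1 : ℕ) : ZMod (p ^ e i0)) :=
        map_natCast (ZMod.castHom (pow_dvd_pow p hee) (ZMod (p ^ e i0))) _
      have hcomp : (φ q) i0 = ((p ^ d i1 : ℕ) : ZMod (p ^ e i0)) := by
        rw [hφ, shear_apply, Pi.add_apply, Pi.single_eq_same, hq,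
          Pi.single_eq_of_ne hne, Pi.single_eq_same, hfval, zero_add]
      have hdvd := (hmemQ _).mp hφqQ i0
      rw [hcomp, ZMod.val_natCast, Nat.mod_eq_of_lt
        (Nat.pow_lt_pow_right hp.one_lt (lt_of_lt_of_le hcon (hde i0)))] at hdvd
      have := (Nat.pow_dvd_pow_iff_le_right hp.one_lt).mp hdvd
      omega
    · -- e i0 - d i0 ≤ e i1 - d i1
      by_contra hcon
      push_neg at hcon
      have hdi0 : d i0 < e i0 := by
        have := hde i0
        have := hde i1
        omega
      set u : ZMod (p ^ e i1) := ((p ^ (e i1 - e i0) : ℕ) : ZMod (p ^ e i1)) with hu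
      have hgu : (zmultiplesHom (ZMod (p ^ e i1)) u) ((p ^ e i0 : ℕ) : ℤ) = 0 := by
        show ((p ^ e i0 : ℕ) : ℤ) • u = 0
        rw [hu]
        push_cast [zsmul_eq_mul]
        rw [← Nat.cast_pow, ← Nat.cast_pow, ← Nat.cast_mul, ← pow_add,
          show e i0 + (e i1 - e i0) = e i1 by omega, ZMod.natCast_self]
      set g : ZMod (p ^ e i0) →+ ZMod (p ^ e i1) :=
        ZMod.lift (p ^ e i0) ⟨zmultiplesHom _ u, hgu⟩ with hg
      set φ := shear (A := fun k : Fin n => ZMod (p ^ e k)) i0 i1 hne g with hφ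
      set q : ∀ k : Fin n, ZMod (p ^ e k) :=
        Pi.single i0 ((p ^ d i0 : ℕ) : ZMod (p ^ e i0)) with hq
      have hqQ : q ∈ Q := by
        rw [hmemQ]
        intro k
        by_cases hk : k = i0
        · subst hk
          rw [hq, Pi.single_eq_same, ZMod.val_natCast]
          exact Nat.dvd_mod_iff (pow_dvd_pow p (hde _)) |>.mpr dvd_rfl
        · rw [hq, Pi.single_eq_of_ne hk]
          simp
      have hφqQ : φ q ∈ Q := by
        have := hchar.fixed φ
        rw [← this] at hqQ
        exact hqQ
      have hgval : g ((p ^ d i0 : ℕ) : ZMod (p ^ e i0)) =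
          ((p ^ (d i0 + (e i1 - e i0)) : ℕ) : ZMod (p ^ e i1)) := by
        rw [hg]
        have hcast : ((p ^ d i0 : ℕ) : ZMod (p ^ e i0)) = (((p ^ d i0 : ℤ)) : ZMod (p ^ e i0)) := by
          push_cast; ring
        rw [hcast, ZMod.lift_coe]
        show ((p ^ d i0 : ℤ)) • u = _
        rw [hu]
        push_cast [zsmul_eq_mul]
        rw [← pow_add]
      have hcomp : (φ q) i1 = ((p ^ (d i0 + (e i1 - e i0)) : ℕ) : ZMod (p ^ e i1)) := by
        rw [hφ, shear_apply, Pi.add_apply, Pi.single_eq_same, hq,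
          Pi.single_eq_of_ne hne.symm, Pi.single_eq_same, hgval]
        simp
      have hdvd := (hmemQ _).mp hφqQ i1
      have hlt : d i0 + (e i1 - e i0) < e i1 := by omega
      rw [hcomp, ZMod.val_natCast,
        Nat.mod_eq_of_lt (Nat.pow_lt_pow_right hp.one_lt hlt)] at hdvd
      have := (Nat.pow_dvd_pow_iff_le_right hp.one_lt).mp hdvd
      omega
  · -- reverse direction
    intro h
    have hmonod : ∀ i j : Fin n, i ≤ j → d i ≤ d j ∧ e i - d i ≤ e j - d j := by
      rintro ⟨a, ha⟩ ⟨b, hb⟩ hab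
      rw [Fin.mk_le_mk] at hab
      induction b with
      | zero =>
        have : a = 0 := by omega
        subst this
        exact ⟨le_rfl, le_rfl⟩
      | succ b ih =>
        rcases Nat.lt_or_ge a (b + 1) with hlt | hge
        · have hab' : a ≤ b := by omega
          have hbn : b < n := by omega
          have h1 := ih hbn hab'
          have h2 := h b hb
          constructor
          · exact le_trans h1.1 h2.1
          · exact le_trans h1.2 h2.2
        · have : a = b + 1 := by omega
          subst this
          exact ⟨le_rfl, le_rfl⟩
    have key : ∀ (φ : (∀ k : Fin n, ZMod (p ^ e k)) →+ (∀ k : Fin n, ZMod (p ^ e k)))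
        (x : ∀ k : Fin n, ZMod (p ^ e k)), x ∈ Q → φ x ∈ Q := by
      intro φ x hx
      rw [← Finset.univ_sum_single x, map_sum]
      apply AddSubgroup.sum_mem
      intro i _
      rw [hmemQ]
      intro j
      have hψ : φ (Pi.single i (x i)) j =
          ((Pi.evalAddMonoidHom (fun k : Fin n => ZMod (p ^ e k)) j).comp
            (φ.comp (AddMonoidHom.single (fun k : Fin n => ZMod (p ^ e k)) i))) (x i) := rfl
      rw [hψ]
      have hc : p ^ d i ∣ (x i).val := (hmemQ x).mp hx i
      refine core hp (hde i) (hde j) ?_ _ _ hc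
      rcases le_total i j with hij | hji
      · exact Or.inr ⟨hmono hij, (hmonod i j hij).2⟩
      · exact Or.inl (hmonod j i hji).1
    refine ⟨fun φ => ?_⟩
    refine SetLike.ext fun x => ?_
    rw [AddSubgroup.mem_comap]
    constructor
    · intro hx
      have h2 := key φ.symm.toAddMonoidHom _ hx
      simpa using h2
    · intro hx
      exact key φ.toAddMonoidHom x hx
end

section
/- Let p be a prime, P a finite abelian p-group, and φ an automorphism of P. For i ∈ {1,...,p−1}, let μ_i denote multiplication by i on P. Then for each i, Fix(μ_i ∘ φ) intersects the subgroup generated by the union of Fix(μ_j ∘ φ) for j ≠ i (j ∈ {1,...,p−1}) trivially. -/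
open Polynomial

private lemma end_mul_apply {P : Type*} [AddCommMonoid P] (f g : AddMonoid.End P) (x : P) :
    (f * g) x = f (g x) := rfl

theorem stmt_12 {p : ℕ} (hp : p.Prime) {P : Type*} [AddCommGroup P] [Finite P]
    (hP : ∃ k : ℕ, Nat.card P = p ^ k) (φ : P ≃+ P)
    (i : ℕ) (hi1 : 1 ≤ i) (hi2 : i ≤ p - 1) :
    {x : P | i • φ x = x} ∩
      (AddSubgroup.closure
        (⋃ j ∈ (Finset.Icc 1 (p - 1)).erase i, {x : P | j • φ x = x}) : Set P)
      = {0} := by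
  obtain ⟨k, hk⟩ := hP
  set Φ : AddMonoid.End P := φ.toAddMonoidHom with hΦ
  set s : Finset ℕ := (Finset.Icc 1 (p - 1)).erase i with hs
  have hqeval : ∀ (j : ℕ) (y : P), (aeval Φ (C (j:ℤ) * X - 1)) y = (j : ℤ) • φ y - y := by
    intro j y
    simp only [map_sub, map_mul, aeval_C, aeval_X, map_intCast, map_one, AddMonoidHom.sub_apply,
      AddMonoid.End.one_apply, end_mul_apply, algebraMap_int_eq, eq_intCast,
      AddMonoid.End.intCast_apply]
    rfl
  -- φ commutes with any aeval of Φ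
  have hcomm : ∀ (r : ℤ[X]) (y : P), φ ((aeval Φ r) y) = (aeval Φ r) (φ y) := by
    intro r y
    have : Commute (aeval Φ r) (aeval Φ X) := (Commute.all r X).map (aeval Φ)
    rw [aeval_X] at this
    have := congrArg (fun f : AddMonoid.End P => f y) this.symm
    simp only [end_mul_apply] at this
    exact this
  -- killing lemma
  have hkill : ∀ y ∈ AddSubgroup.closure (⋃ j ∈ s, {x : P | j • φ x = x}),
      (aeval Φ (∏ j ∈ s, (C (j:ℤ) * X - 1))) y = 0 := by
    intro y hy
    refine AddSubgroup.closure_induction (fun z hz => ?_) (by simp)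
      (fun a b _ _ iha ihb => by rw [map_add, iha, ihb, add_zero])
      (fun a _ iha => by rw [map_neg, iha, neg_zero]) hy
    obtain ⟨j, hj, hzj⟩ := Set.mem_iUnion₂.mp hz
    have h0 : (aeval Φ (C (j:ℤ) * X - 1)) z = 0 := by
      rw [hqeval]
      have : (j : ℤ) • φ z = z := by rw [natCast_zsmul]; exact hzj
      rw [this, sub_self]
    rw [← Finset.prod_erase_mul s _ hj, map_mul, end_mul_apply, h0, map_zero]
  -- key computation on the fixed set of i
  have key : ∀ (t : Finset ℕ) (y : P), (i:ℤ) • φ y = y →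
      ((i:ℤ) ^ t.card) • (aeval Φ (∏ j ∈ t, (C (j:ℤ) * X - 1))) y
        = (∏ j ∈ t, ((j:ℤ) - i)) • y := by
    intro t
    induction t using Finset.induction_on with
    | empty => intro y _; simp
    | insert a t ha iht =>
      intro y hy
      set z := (aeval Φ (∏ j ∈ t, (C (j:ℤ) * X - 1))) y with hz
      have hzfix : (i:ℤ) • φ z = z := by
        rw [hz, hcomm, ← map_zsmul, hy]
      rw [Finset.prod_insert ha, Finset.prod_insert ha, map_mul, end_mul_apply,
        Finset.card_insert_of_notMem ha, pow_succ, mul_smul, ← hz, hqeval]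
      have h1 : (i:ℤ) • ((a:ℤ) • φ z - z) = ((a:ℤ) - i) • z := by
        rw [smul_sub, smul_comm, hzfix, ← sub_smul]
      rw [h1, smul_comm, iht y hy, smul_comm]
      rw [mul_smul]; exact smul_comm _ _ _
  -- now the set equality
  apply Set.eq_singleton_iff_unique_mem.mpr
  constructor
  · exact ⟨by simp, (AddSubgroup.closure _).zero_mem⟩
  · rintro x ⟨hx, hcl⟩
    have hx' : (i:ℤ) • φ x = x := by rw [natCast_zsmul]; exact hx
    have h0 : (∏ j ∈ s, ((j:ℤ) - i)) • x = 0 := by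
      rw [← key s x hx', hkill x hcl, smul_zero]
    -- coprimality
    have hpz : Prime (p : ℤ) := Nat.prime_iff_prime_int.mp hp
    have hnd : ¬ (p:ℤ) ∣ ∏ j ∈ s, ((j:ℤ) - i) := by
      intro hd
      obtain ⟨j, hj, hjd⟩ := hpz.exists_mem_finset_dvd hd
      have hji : j ≠ i := Finset.ne_of_mem_erase hj
      have hjm := Finset.mem_of_mem_erase hj
      rw [Finset.mem_Icc] at hjm
      have hple : 2 ≤ p := hp.two_le
      have : (j:ℤ) - i = 0 := by
        refine Int.eq_zero_of_abs_lt_dvd hjd ?_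
        rw [abs_lt]
        constructor <;> [skip; skip] <;> omega
      omega
    have hcop : IsCoprime (∏ j ∈ s, ((j:ℤ) - i)) ((p:ℤ) ^ k) :=
      ((hpz.coprime_iff_not_dvd.mpr hnd).symm.pow_right)
    obtain ⟨u, v, huv⟩ := hcop
    have hcard : ((p:ℤ) ^ k) • x = 0 := by
      have h1 : (Nat.card P) • x = 0 := card_nsmul_eq_zero'
      rw [hk] at h1
      have : ((p:ℤ) ^ k) • x = (p ^ k : ℕ) • x := by
        rw [← Nat.cast_pow, natCast_zsmul]
      rw [this, h1]
    calc x = (1 : ℤ) • x := (one_smul _ _).symm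
    _ = (u * ∏ j ∈ s, ((j:ℤ) - i) + v * (p:ℤ)^k) • x := by rw [huv]
    _ = u • ((∏ j ∈ s, ((j:ℤ) - i)) • x) + v • (((p:ℤ)^k) • x) := by
        rw [add_smul, mul_smul, mul_smul]
    _ = 0 := by rw [h0, hcard, smul_zero, smul_zero, add_zero]
end

section
/- Let p be a prime, P a finite abelian p-group, and φ an automorphism of P. Then the product over i = 1, ..., p−1 of |Fix(μ_i ∘ φ)| is at most |P|, where μ_i is multiplication by i. -/
lemma aux_torsion {p : ℕ} (hp : p.Prime) {P : Type*} [AddCommGroup P] [Finite P]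
    (hP : ∃ k : ℕ, Nat.card P = p ^ k) {n : ℤ} (hn : ¬ (p : ℤ) ∣ n) {x : P}
    (h : n • x = 0) : x = 0 := by
  obtain ⟨k, hk⟩ := hP
  have h1 : addOrderOf x ∣ p ^ k := hk ▸ addOrderOf_dvd_natCard x
  have h2 : (n.natAbs : ℤ) • x = 0 := by
    rcases Int.natAbs_eq n with e | e
    · rw [← e, h]
    · rw [← neg_neg ((n.natAbs : ℤ)), ← e, neg_smul, h, neg_zero]
  have h2' : n.natAbs • x = 0 := by rwa [natCast_zsmul] at h2
  have h3 : addOrderOf x ∣ n.natAbs := addOrderOf_dvd_of_nsmul_eq_zero h2'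
  have hcop : Nat.Coprime (p ^ k) n.natAbs := by
    apply Nat.Coprime.pow_left
    rw [hp.coprime_iff_not_dvd]
    intro hd
    exact hn (Int.dvd_natAbs.mp (Int.natCast_dvd_natCast.mpr hd))
  have : addOrderOf x ∣ 1 := Nat.dvd_gcd h1 h3 |>.trans hcop.dvd
  rw [Nat.dvd_one] at this
  exact AddMonoid.addOrderOf_eq_one_iff.mp this

lemma aux_indep {p : ℕ} (hp : p.Prime) {P : Type*} [AddCommGroup P] [Finite P]
    (hP : ∃ k : ℕ, Nat.card P = p ^ k) (φ : P ≃+ P) (s : Finset ℕ) :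
    ∀ x : ℕ → P, (∀ i ∈ s, 1 ≤ i ∧ i ≤ p - 1) → (∀ i ∈ s, i • φ (x i) = x i) →
      ∑ i ∈ s, x i = 0 → ∀ i ∈ s, x i = 0 := by
  classical
  induction s using Finset.induction_on with
  | empty => intro x _ _ _ i hi; exact absurd hi (Finset.notMem_empty i)
  | @insert a t ha IH =>
    intro x hrange hfix hsum
    rw [Finset.sum_insert ha] at hsum
    have hsum_t : ∑ i ∈ t, x i = - x a := by linear_combination (norm := abel) hsum
    set y : ℕ → P := fun i => (a - i : ℤ) • x i with hy
    have hy_sum : ∑ i ∈ t, y i = 0 := by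
      have hφ : φ (∑ i ∈ t, y i) = 0 := by
        rw [map_sum]
        have : ∀ i ∈ t, φ (y i) = (a : ℤ) • φ (x i) - x i := by
          intro i hi
          rw [hy]
          simp only
          rw [map_zsmul, sub_smul, natCast_zsmul, natCast_zsmul, hfix i (Finset.mem_insert_of_mem hi)]
        rw [Finset.sum_congr rfl this, Finset.sum_sub_distrib, ← Finset.smul_sum,
          ← map_sum, hsum_t, map_neg, smul_neg, natCast_zsmul,
          hfix a (Finset.mem_insert_self a t)]
        abel
      exact φ.injective (by rw [hφ]; exact (map_zero φ).symm)
    have hy_fix : ∀ i ∈ t, i • φ (y i) = y i := by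
      intro i hi
      rw [hy]
      simp only
      rw [map_zsmul, smul_comm, hfix i (Finset.mem_insert_of_mem hi)]
    have hy_range : ∀ i ∈ t, 1 ≤ i ∧ i ≤ p - 1 := fun i hi =>
      hrange i (Finset.mem_insert_of_mem hi)
    have hy0 : ∀ i ∈ t, y i = 0 := IH y hy_range hy_fix hy_sum
    have hx0 : ∀ i ∈ t, x i = 0 := by
      intro i hi
      apply aux_torsion hp hP (n := (a - i : ℤ)) _ (hy0 i hi)
      intro hd
      have hai : a ≠ i := fun e => ha (e ▸ hi)
      have h1 : p ∣ (a - i : ℤ).natAbs := Int.natCast_dvd_natCast.mp (Int.dvd_natAbs.mpr hd)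
      have hpos : (a - i : ℤ).natAbs ≠ 0 := by
        simp only [ne_eq, Int.natAbs_eq_zero, sub_eq_zero]
        exact_mod_cast hai
      have hle : p ≤ (a - i : ℤ).natAbs := Nat.le_of_dvd (Nat.pos_of_ne_zero hpos) h1
      have ha' := hrange a (Finset.mem_insert_self a t)
      have hi' := hrange i (Finset.mem_insert_of_mem hi)
      have hp1 : 1 ≤ p - 1 := le_trans ha'.1 ha'.2
      have hlt : (a - i : ℤ).natAbs < p := by
        have h2 : (a : ℤ) ≤ p - 1 := by
          have := ha'.2; omega
        have h3 : (i : ℤ) ≤ p - 1 := by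
          have := hi'.2; omega
        have h4 : (1 : ℤ) ≤ a := by exact_mod_cast ha'.1
        have h5 : (1 : ℤ) ≤ i := by exact_mod_cast hi'.1
        have hpp : (2 : ℤ) ≤ p := by exact_mod_cast hp.two_le
        omega
      omega
    intro i hi
    rcases Finset.mem_insert.mp hi with rfl | hi'
    · have : ∑ j ∈ t, x j = 0 := Finset.sum_eq_zero hx0
      rw [this, add_zero] at hsum
      exact hsum
    · exact hx0 i hi'

theorem stmt_13 {p : ℕ} (hp : p.Prime) {P : Type*} [AddCommGroup P] [Finite P]
    (hP : ∃ k : ℕ, Nat.card P = p ^ k) (φ : P ≃+ P) :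
    ∏ i ∈ Finset.Icc 1 (p - 1), Nat.card {x : P // i • φ x = x} ≤ Nat.card P := by
  classical
  set s := Finset.Icc 1 (p - 1) with hs
  set F : (∀ i : s, {x : P // (i : ℕ) • φ x = x}) → P :=
    fun f => ∑ i ∈ s.attach, (f i : P) with hF
  have hinj : Function.Injective F := by
    intro f g h
    set x : ℕ → P := fun i => if h : i ∈ s then (f ⟨i, h⟩ : P) - (g ⟨i, h⟩ : P) else 0 with hx
    have hsum : ∑ i ∈ s, x i = 0 := by
      rw [← Finset.sum_attach s x]
      have : ∀ i ∈ s.attach, x i = (f i : P) - (g i : P) := by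
        intro i _
        simp only [hx, dif_pos i.2]
      rw [Finset.sum_congr rfl this, Finset.sum_sub_distrib]
      rw [hF] at h
      simp only at h
      rw [h, sub_self]
    have hfix : ∀ i ∈ s, i • φ (x i) = x i := by
      intro i hi
      simp only [hx, dif_pos hi, map_sub, smul_sub, (f ⟨i, hi⟩).2, (g ⟨i, hi⟩).2]
    have hrange : ∀ i ∈ s, 1 ≤ i ∧ i ≤ p - 1 := by
      intro i hi
      rw [hs, Finset.mem_Icc] at hi
      exact hi
    have h0 := aux_indep hp hP φ s x hrange hfix hsum
    funext i
    apply Subtype.ext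
    have := h0 i i.2
    simp only [hx, dif_pos i.2, sub_eq_zero] at this
    convert this
  calc ∏ i ∈ s, Nat.card {x : P // i • φ x = x}
      = Nat.card (∀ i : s, {x : P // (i : ℕ) • φ x = x}) := by
        rw [Nat.card_pi, ← Finset.prod_coe_sort]
    _ ≤ Nat.card P := Nat.card_le_card_of_injective F hinj
end

section
/- Let p be a prime, n ≥ 1, and P = Z/p^nZ ⊕ Z/p^{n+1}Z. The automorphism φ of P given by φ(x, y) = (x + y, px + y) satisfies |Fix(φ)| = p, and for each i ∈ {2, ..., p−1} the map (x,y) ↦ i·φ(x,y) has only the trivial fixed point. -/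
lemma aux_int {p n : ℕ} {i a b c : ℤ} (hp : Prime (p:ℤ)) (h2i : 2 ≤ i) (hip : i < p)
    (ha0 : 0 ≤ a) (ha : a < (p:ℤ)^n) (hc0 : 0 ≤ c) (hc : c < (p:ℤ)^n)
    (e1 : (p:ℤ)^n ∣ i*(a+b) - a) (e2' : (p:ℤ)^n ∣ i*a + (i-1)*c) (hbc : b = p * c) :
    a = 0 ∧ c = 0 := by
  have hp0 : (0:ℤ) < p := by linarith
  have hpd1 : ¬ (p:ℤ) ∣ (i - 1) := by
    intro h
    have := Int.le_of_dvd (by linarith) h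
    linarith
  subst hbc
  have hDc : (p:ℤ)^n ∣ ((i-1)^2 - i^2*p) * c := by
    have h := dvd_sub (e2'.mul_left (i-1)) (e1.mul_left i)
    have heq : (i-1)*(i*a+(i-1)*c) - i*(i*(a+p*c) - a) = ((i-1)^2 - i^2*p)*c := by ring
    rwa [heq] at h
  have hDa : (p:ℤ)^n ∣ ((i-1)^2 - i^2*p) * a := by
    have h := dvd_sub (e1.mul_left (i-1)) (e2'.mul_left (i*p))
    have heq : (i-1)*(i*(a+p*c)-a) - (i*p)*(i*a+(i-1)*c) = ((i-1)^2 - i^2*p)*a := by ring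
    rwa [heq] at h
  have hD : ¬ (p:ℤ) ∣ ((i-1)^2 - i^2*p) := by
    intro h
    have h2 : (p:ℤ) ∣ (i-1)^2 := by
      have heq : (i-1)^2 = ((i-1)^2 - i^2*p) + p*(i^2) := by ring
      rw [heq]; exact dvd_add h (dvd_mul_right _ _)
    exact hpd1 (hp.dvd_of_dvd_pow h2)
  have hco : IsCoprime ((p:ℤ)^n) ((i-1)^2 - i^2*p) :=
    (hp.irreducible.coprime_iff_not_dvd.mpr hD).pow_left
  have hda : (p:ℤ)^n ∣ a := hco.dvd_of_dvd_mul_left hDa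
  have hdc : (p:ℤ)^n ∣ c := hco.dvd_of_dvd_mul_left hDc
  constructor
  · by_contra h
    have := Int.le_of_dvd (ha0.lt_of_ne (Ne.symm h)) hda
    linarith
  · by_contra h
    have := Int.le_of_dvd (hc0.lt_of_ne (Ne.symm h)) hdc
    linarith

theorem stmt_16 {p n : ℕ} (hp : p.Prime) (hn : 1 ≤ n) :
    Nat.card {z : ZMod (p ^ n) × ZMod (p ^ (n + 1)) //
        (z.1 + ZMod.castHom (pow_dvd_pow p (Nat.le_succ n)) (ZMod (p ^ n)) z.2,
          (p : ZMod (p ^ (n + 1))) * (z.1.val : ZMod (p ^ (n + 1))) + z.2) = z} = p ∧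
    ∀ i : ℕ, 2 ≤ i → i ≤ p - 1 →
      ∀ z : ZMod (p ^ n) × ZMod (p ^ (n + 1)),
        i • (z.1 + ZMod.castHom (pow_dvd_pow p (Nat.le_succ n)) (ZMod (p ^ n)) z.2,
          (p : ZMod (p ^ (n + 1))) * (z.1.val : ZMod (p ^ (n + 1))) + z.2) = z →
        z = 0 := by
  haveI h1 : NeZero (p^n) := ⟨pow_ne_zero _ hp.pos.ne'⟩
  haveI h2 : NeZero (p^(n+1)) := ⟨pow_ne_zero _ hp.pos.ne'⟩
  have hpZ : Prime (p:ℤ) := Nat.prime_iff_prime_int.mp hp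
  have hcond : ∀ z : ZMod (p ^ n) × ZMod (p ^ (n + 1)),
      ((z.1 + ZMod.castHom (pow_dvd_pow p (Nat.le_succ n)) (ZMod (p ^ n)) z.2,
          (p : ZMod (p ^ (n + 1))) * (z.1.val : ZMod (p ^ (n + 1))) + z.2) = z) ↔
      (z.1 = 0 ∧ ZMod.castHom (pow_dvd_pow p (Nat.le_succ n)) (ZMod (p ^ n)) z.2 = 0) := by
    intro z
    rw [Prod.ext_iff]
    simp only [add_eq_left, add_eq_right]
    constructor
    · rintro ⟨hc1, hc2⟩
      refine ⟨?_, hc1⟩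
      have hc2' : ((p * z.1.val : ℕ) : ZMod (p^(n+1))) = 0 := by push_cast; exact hc2
      rw [ZMod.natCast_eq_zero_iff] at hc2'
      have hdvd : p^n ∣ z.1.val := by
        have h' : p * p^n ∣ p * z.1.val := by
          rw [← pow_succ']; exact hc2'
        exact (Nat.mul_dvd_mul_iff_left hp.pos).mp h'
      have := Nat.eq_zero_of_dvd_of_lt hdvd (ZMod.val_lt z.1)
      exact (ZMod.val_eq_zero z.1).mp this
    · rintro ⟨hz1, hz2⟩
      refine ⟨hz2, ?_⟩
      rw [hz1]
      simp
  constructor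
  · -- cardinality
    set f := (ZMod.castHom (pow_dvd_pow p (Nat.le_succ n)) (ZMod (p ^ n))).toAddMonoidHom with hf
    have hsurj : Function.Surjective f := ZMod.ringHom_surjective _
    have hcard1 : Nat.card (ZMod (p^(n+1))) = Nat.card (ZMod (p^(n+1)) ⧸ f.ker) * Nat.card f.ker :=
      AddSubgroup.card_eq_card_quotient_mul_card_addSubgroup _
    have hcard2 : Nat.card (ZMod (p^(n+1)) ⧸ f.ker) = Nat.card (ZMod (p^n)) :=
      Nat.card_congr (QuotientAddGroup.quotientKerEquivOfSurjective f hsurj).toEquiv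
    rw [hcard2, Nat.card_zmod, Nat.card_zmod] at hcard1
    have hk : Nat.card f.ker = p :=
      Nat.eq_of_mul_eq_mul_left (pow_pos hp.pos n) (by rw [← hcard1, pow_succ])
    have e : {z : ZMod (p ^ n) × ZMod (p ^ (n + 1)) //
        (z.1 + ZMod.castHom (pow_dvd_pow p (Nat.le_succ n)) (ZMod (p ^ n)) z.2,
          (p : ZMod (p ^ (n + 1))) * (z.1.val : ZMod (p ^ (n + 1))) + z.2) = z} ≃ f.ker :=
      { toFun := fun z => ⟨z.1.2, ((hcond z.1).mp z.2).2⟩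
        invFun := fun y => ⟨(0, y.1), (hcond _).mpr ⟨rfl, y.2⟩⟩
        left_inv := fun z => Subtype.ext (Prod.ext ((hcond z.1).mp z.2).1.symm rfl)
        right_inv := fun y => rfl }
    rw [Nat.card_congr e, hk]
  · -- trivial fixed points
    intro i h2i hip1 z h
    rw [Prod.smul_mk, Prod.mk.injEq] at h
    obtain ⟨hA, hB⟩ := h
    rw [nsmul_eq_mul] at hA hB
    set a := z.1.val with hav
    set b := z.2.val with hbv
    have hxa : ((a : ℕ) : ZMod (p^n)) = z.1 := by rw [ZMod.natCast_val, ZMod.cast_id]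
    have hyb : ((b : ℕ) : ZMod (p^n)) = ZMod.castHom (pow_dvd_pow p (Nat.le_succ n)) (ZMod (p ^ n)) z.2 := by
      rw [ZMod.natCast_val]; rfl
    have hyb1 : ((b : ℕ) : ZMod (p^(n+1))) = z.2 := by rw [ZMod.natCast_val, ZMod.cast_id]
    have e1 : (p:ℤ)^n ∣ (i:ℤ)*((a:ℤ)+(b:ℤ)) - (a:ℤ) := by
      have h0 : (((i:ℤ)*((a:ℤ)+(b:ℤ)) - (a:ℤ) : ℤ) : ZMod (p^n)) = 0 := by
        push_cast
        rw [hxa, hyb, sub_eq_zero]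
        exact hA
      rw [ZMod.intCast_zmod_eq_zero_iff_dvd] at h0
      exact_mod_cast h0
    have e2 : (p:ℤ)^(n+1) ∣ (i:ℤ)*((p:ℤ)*(a:ℤ)+(b:ℤ)) - (b:ℤ) := by
      have h0 : (((i:ℤ)*((p:ℤ)*(a:ℤ)+(b:ℤ)) - (b:ℤ) : ℤ) : ZMod (p^(n+1))) = 0 := by
        push_cast
        rw [hyb1, sub_eq_zero]
        exact hB
      rw [ZMod.intCast_zmod_eq_zero_iff_dvd] at h0
      exact_mod_cast h0
    -- extract p ∣ b
    have hip : (i:ℤ) < (p:ℤ) := by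
      have : i < p := by have := hp.two_le; omega
      exact_mod_cast this
    have h2i' : (2:ℤ) ≤ (i:ℤ) := by exact_mod_cast h2i
    have hpd1 : ¬ (p:ℤ) ∣ ((i:ℤ) - 1) := by
      intro hd
      have := Int.le_of_dvd (by linarith) hd
      linarith
    have hpb : (p:ℤ) ∣ (b:ℤ) := by
      have hdb : (p:ℤ) ∣ ((i:ℤ)-1)*(b:ℤ) := by
        have hpe2 : (p:ℤ) ∣ (i:ℤ)*((p:ℤ)*(a:ℤ)+(b:ℤ)) - (b:ℤ) :=
          dvd_trans (dvd_pow_self (p:ℤ) (Nat.succ_ne_zero n)) e2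
        have heq : ((i:ℤ)-1)*(b:ℤ) = ((i:ℤ)*((p:ℤ)*(a:ℤ)+(b:ℤ)) - (b:ℤ)) - (p:ℤ)*((i:ℤ)*(a:ℤ)) := by ring
        rw [heq]
        exact dvd_sub hpe2 (dvd_mul_right _ _)
      exact (hpZ.dvd_mul.mp hdb).resolve_left hpd1
    obtain ⟨c, hbc⟩ := hpb
    have hp0 : (0:ℤ) < p := by exact_mod_cast hp.pos
    have hc0 : 0 ≤ c := by nlinarith [Int.natCast_nonneg b]
    have hbn : ((b:ℤ)) < (p:ℤ)^(n+1) := by exact_mod_cast ZMod.val_lt z.2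
    have hcn : c < (p:ℤ)^n := by
      rw [hbc, pow_succ'] at hbn
      exact lt_of_mul_lt_mul_left hbn (le_of_lt hp0)
    have e2' : (p:ℤ)^n ∣ (i:ℤ)*(a:ℤ) + ((i:ℤ)-1)*c := by
      have h := e2
      rw [hbc, pow_succ'] at h
      have heq : (i:ℤ)*((p:ℤ)*(a:ℤ)+(p:ℤ)*c) - (p:ℤ)*c = (p:ℤ) * ((i:ℤ)*(a:ℤ) + ((i:ℤ)-1)*c) := by ring
      rw [heq] at h
      exact (mul_dvd_mul_iff_left hp0.ne').mp h
    have han : ((a:ℤ)) < (p:ℤ)^n := by exact_mod_cast ZMod.val_lt z.1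
    obtain ⟨ha0, hc0'⟩ := aux_int hpZ h2i' hip (Int.natCast_nonneg a) han hc0 hcn
      e1 e2' hbc
    have hb0 : (b:ℤ) = 0 := by rw [hbc, hc0', mul_zero]
    have hz1 : z.1 = 0 := by
      rw [← (ZMod.val_eq_zero z.1)]
      exact_mod_cast ha0
    have hz2 : z.2 = 0 := by
      rw [← (ZMod.val_eq_zero z.2)]
      exact_mod_cast hb0
    exact Prod.ext hz1 hz2
end

section
/- Let n ≥ 1 and P = Z/2^nZ. Then SpecR(P) = {2^i : 1 ≤ i ≤ n}. In particular, 1 is not a Reidemeister number of any automorphism of Z/2^nZ. -/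
lemma twisted_eq_card_ker {A : Type*} [AddCommGroup A] [Finite A] (φ : A →+ A) :
    twistedClasses φ = Nat.card (AddMonoidHom.id A - φ).ker := by
  set ψ : A →+ A := AddMonoidHom.id A - φ with hψ
  have hψ_apply : ∀ x : A, ψ x = x - φ x := fun x => rfl
  have hrel : ∀ x y : A, (∃ z : A, x = z + y - φ z) ↔
      (QuotientAddGroup.leftRel ψ.range) x y := by
    intro x y
    rw [QuotientAddGroup.leftRel_apply]
    constructor
    · rintro ⟨z, rfl⟩
      exact ⟨-z, by simp [hψ_apply]; abel⟩
    · rintro ⟨z, hz⟩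
      refine ⟨-z, ?_⟩
      rw [hψ_apply] at hz
      have : x = -(z - φ z) + y := by rw [hz]; abel
      rw [this, map_neg]; abel
  have e : Quot (fun x y : A => ∃ z : A, x = z + y - φ z) ≃ (A ⧸ ψ.range) :=
    Quot.congrRight hrel
  have h1 : Nat.card A = Nat.card (A ⧸ ψ.range) * Nat.card ψ.range :=
    AddSubgroup.card_eq_card_quotient_mul_card_addSubgroup ψ.range
  have h2 : Nat.card A = Nat.card (A ⧸ ψ.ker) * Nat.card ψ.ker :=
    AddSubgroup.card_eq_card_quotient_mul_card_addSubgroup ψ.ker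
  have h3 : Nat.card (A ⧸ ψ.ker) = Nat.card ψ.range :=
    Nat.card_congr (QuotientAddGroup.quotientKerEquivRange ψ).toEquiv
  have hpos : 0 < Nat.card ψ.range := Nat.card_pos
  have key : Nat.card (A ⧸ ψ.range) = Nat.card ψ.ker := by
    have := h1.symm.trans h2
    rw [h3, mul_comm (Nat.card ψ.range)] at this
    exact Nat.eq_of_mul_eq_mul_right hpos this
  rw [twistedClasses, Nat.card_congr e, key]

lemma card_ker_mulLeft_s17 {m : ℕ} [NeZero m] (c : ZMod m) :
    Nat.card (AddMonoidHom.mulLeft c).ker = Nat.gcd m c.val := by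
  have hgdvd : Nat.gcd m c.val ∣ m := Nat.gcd_dvd_left _ _
  have hrange : (AddMonoidHom.mulLeft c).range = AddSubgroup.zmultiples c := by
    ext y
    simp only [AddMonoidHom.mem_range, AddSubgroup.mem_zmultiples_iff]
    constructor
    · rintro ⟨x, rfl⟩
      obtain ⟨k, rfl⟩ := ZMod.natCast_zmod_surjective x
      exact ⟨k, by rw [natCast_zsmul, nsmul_eq_mul, mul_comm]; rfl⟩
    · rintro ⟨k, rfl⟩
      exact ⟨k, by rw [zsmul_eq_mul, mul_comm]; rfl⟩
  have hR : Nat.card (AddMonoidHom.mulLeft c).range = m / Nat.gcd m c.val := by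
    rw [hrange, Nat.card_zmultiples]
    conv_lhs => rw [show c = ((c.val : ℕ) : ZMod m) from (ZMod.natCast_zmod_val c).symm]
    exact ZMod.addOrderOf_coe c.val (NeZero.ne m)
  have h2 : Nat.card (ZMod m) =
      Nat.card (ZMod m ⧸ (AddMonoidHom.mulLeft c).ker) * Nat.card (AddMonoidHom.mulLeft c).ker :=
    AddSubgroup.card_eq_card_quotient_mul_card_addSubgroup _
  have h3 : Nat.card (ZMod m ⧸ (AddMonoidHom.mulLeft c).ker)
      = Nat.card (AddMonoidHom.mulLeft c).range :=
    Nat.card_congr (QuotientAddGroup.quotientKerEquivRange _).toEquiv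
  rw [h3, hR, Nat.card_zmod] at h2
  have hqpos : 0 < m / Nat.gcd m c.val :=
    Nat.div_pos (Nat.le_of_dvd (Nat.pos_of_ne_zero (NeZero.ne m)) hgdvd)
      (Nat.gcd_pos_of_pos_left _ (Nat.pos_of_ne_zero (NeZero.ne m)))
  have hm : m = m / Nat.gcd m c.val * Nat.gcd m c.val := (Nat.div_mul_cancel hgdvd).symm
  exact (Nat.eq_of_mul_eq_mul_left hqpos (hm.symm.trans h2)).symm

lemma hom_eq_mulLeft {m : ℕ} [NeZero m] (f : ZMod m →+ ZMod m) :
    f = AddMonoidHom.mulLeft (f 1) := by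
  ext x
  obtain ⟨k, rfl⟩ := ZMod.natCast_zmod_surjective x
  show f ↑k = f 1 * ↑k
  rw [show ((k : ZMod m)) = k • (1 : ZMod m) by rw [nsmul_eq_mul, mul_one],
    map_nsmul, nsmul_eq_mul, nsmul_eq_mul, mul_one, mul_comm]

lemma twisted_equiv {m : ℕ} [NeZero m] (φ : ZMod m ≃+ ZMod m) :
    twistedClasses φ.toAddMonoidHom = Nat.gcd m (1 - φ 1).val := by
  have hmul : AddMonoidHom.id (ZMod m) - φ.toAddMonoidHom
      = AddMonoidHom.mulLeft (1 - φ 1) := by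
    ext x
    have := congrArg (fun g : ZMod m →+ ZMod m => g x) (hom_eq_mulLeft φ.toAddMonoidHom)
    show x - φ x = (1 - φ 1) * x
    rw [show φ x = φ 1 * x from this, sub_mul, one_mul]
  rw [twisted_eq_card_ker, hmul, card_ker_mulLeft_s17]

theorem stmt_17 (n : ℕ) (hn : 1 ≤ n) :
    reidSpec (ZMod (2 ^ n)) = {r | ∃ i, 1 ≤ i ∧ i ≤ n ∧ r = 2 ^ i} ∧
      1 ∉ reidSpec (ZMod (2 ^ n)) := by
  have hm : (2 : ℕ) ^ n ≠ 0 := by positivity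
  haveI : NeZero (2 ^ n) := ⟨hm⟩
  have h2dvd : (2 : ℕ) ∣ 2 ^ n := dvd_pow_self 2 (by omega)
  have hmain : reidSpec (ZMod (2 ^ n)) = {r | ∃ i, 1 ≤ i ∧ i ≤ n ∧ r = 2 ^ i} := by
    ext r
    simp only [reidSpec, Set.mem_setOf_eq]
    constructor
    · rintro ⟨φ, rfl⟩
      rw [twisted_equiv]
      set c : ZMod (2 ^ n) := 1 - φ 1 with hc
      -- φ 1 is a unit
      have hu : IsUnit (φ 1) := by
        refine IsUnit.of_mul_eq_one (φ.symm 1) ?_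
        have := congrArg (fun g : ZMod (2^n) →+ ZMod (2^n) => g (φ.symm 1))
          (hom_eq_mulLeft φ.toAddMonoidHom)
        have h1 : φ (φ.symm 1) = 1 := φ.apply_symm_apply 1
        rw [show (φ (φ.symm 1) : ZMod (2^n)) = φ 1 * φ.symm 1 from this] at h1
        exact h1
      -- 2 ∣ c.val
      have h2c : 2 ∣ c.val := by
        have hcast : ((c.val : ℕ) : ZMod 2) = 0 := by
          have hone : ∀ w : ZMod 2, IsUnit w → w = 1 := by decide
          have hmap : (ZMod.castHom h2dvd (ZMod 2)) (φ 1) = 1 :=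
            hone _ (hu.map (ZMod.castHom h2dvd (ZMod 2)))
          have : (ZMod.castHom h2dvd (ZMod 2)) c = 0 := by
            rw [hc, map_sub, map_one, hmap, sub_self]
          rwa [ZMod.castHom_apply, ← ZMod.natCast_val] at this
        exact (ZMod.natCast_eq_zero_iff _ _).mp hcast
      have hgdvd : Nat.gcd (2 ^ n) c.val ∣ 2 ^ n := Nat.gcd_dvd_left _ _
      obtain ⟨i, hin, hgi⟩ := (Nat.dvd_prime_pow Nat.prime_two).mp hgdvd
      refine ⟨i, ?_, hin, hgi⟩
      have h2g : 2 ∣ 2 ^ i := hgi ▸ Nat.dvd_gcd h2dvd h2c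
      rcases Nat.eq_zero_or_pos i with rfl | hi
      · simp at h2g
      · exact hi
    · rintro ⟨i, hi1, hin, rfl⟩
      have h2i : (2 : ℕ) ^ i ≤ 2 ^ n := Nat.pow_le_pow_right (by norm_num) hin
      set a : ℕ := 2 ^ n - 2 ^ i + 1 with ha
      have haodd : Odd a := by
        have hev : Even (2 ^ n - 2 ^ i) := by
          rw [Nat.even_sub h2i]
          simp only [Nat.even_pow]
          constructor <;> (rintro ⟨-, h⟩; exact ⟨even_two, by omega⟩)
        exact Even.add_one hev
      have hcop : Nat.Coprime a (2 ^ n) :=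
        Nat.Coprime.pow_right n (haodd.coprime_two_right)
      set u : (ZMod (2 ^ n))ˣ := ZMod.unitOfCoprime a hcop with hudef
      refine ⟨Multiplicative.toAdd (AddAut.mulLeft u), ?_⟩
      rw [twisted_equiv]
      have hφ1 : (Multiplicative.toAdd (AddAut.mulLeft u)) 1 = (u : ZMod (2 ^ n)) := by
        show u • (1 : ZMod (2 ^ n)) = ↑u
        rw [Units.smul_def, smul_eq_mul, mul_one]
      have huval : (u : ZMod (2 ^ n)) = (a : ZMod (2 ^ n)) := rfl
      have hone_sub : (1 : ZMod (2 ^ n)) - (a : ZMod (2 ^ n)) = ((2 ^ i : ℕ) : ZMod (2 ^ n)) := by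
        rw [ha, Nat.cast_add, Nat.cast_sub h2i, Nat.cast_one, ZMod.natCast_self]
        ring
      rw [hφ1, huval, hone_sub, ZMod.val_natCast]
      rw [Nat.gcd_comm, ← Nat.gcd_rec]
      exact Nat.gcd_eq_right (pow_dvd_pow 2 hin)
  refine ⟨hmain, ?_⟩
  rw [hmain]
  rintro ⟨i, hi1, hin, h1⟩
  have : 1 < 2 ^ i := Nat.one_lt_two_pow_iff.mpr (by omega)
  omega
end
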